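/- For every n ∈ ℕ, E(Xⁿ) = H_n, i.e. the operator e^{−D²/2} maps the monomial Xⁿ to the n-th probabilist's Hermite polynomial. -/

import Mathlib

open Polynomial Finset
open scoped Nat

/-- The operator `e^{−D²/2}` on polynomials: the finite sum
`E p = Σ_{k=0}^{natDegree p} ((−1)^k / (2^k k!)) · p^{(2k)}`. -/
noncomputable def expNegHalfDSq (p : ℝ[X]) : ℝ[X] :=
  ∑ k ∈ range (p.natDegree + 1),
    ((-1 : ℝ) ^ k / (2 ^ k * (k.factorial : ℝ))) • (⇑derivative)^[2 * k] p

/-- `e^{−D²/2}` maps `Xⁿ` to the n-th probabilist's Hermite polynomial. -/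
theorem expNegHalfDSq_monomial (n : ℕ) :
    expNegHalfDSq (X ^ n) = (Polynomial.hermite n).map (Int.castRingHom ℝ) := by
  ext j
  rw [expNegHalfDSq, natDegree_X_pow, coeff_map, coeff_hermite,
    apply_ite (Int.castRingHom ℝ), map_zero]
  simp only [finset_sum_coeff, iterate_derivative_X_pow_eq_smul, coeff_smul, coeff_X_pow,
    smul_eq_mul]
  by_cases hj : j ≤ n
  · by_cases he : Even (n + j)
    · rw [if_pos he]
      have heven : Even (n - j) := by
        rw [Nat.even_sub hj]; rw [Nat.even_add] at he; exact he
      obtain ⟨m, hm⟩ := heven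
      have hm2 : n - j = 2 * m := by omega
      have hk0 : (n - j) / 2 = m := by omega
      rw [Finset.sum_eq_single m]
      · have h1 : j = n - 2 * m := by omega
        rw [if_pos h1, mul_one, Nat.descFactorial_eq_factorial_mul_choose]
        have h3 : Nat.choose n (2 * m) = Nat.choose n j := by
          rw [show j = n - 2 * m from h1, Nat.choose_symm (by omega : 2 * m ≤ n)]
        rw [h3]
        have hfact : ((2 * m)! : ℝ) = 2 ^ m * m ! * ((2 * m - 1)‼ : ℝ) := by
          rcases Nat.eq_zero_or_pos m with rfl | hmpos
          · simp
          · have h5 : 2 * m = (2 * m - 1) + 1 := by omega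
            rw [h5, Nat.factorial_eq_mul_doubleFactorial,
              show 2 * m - 1 + 1 = 2 * m from by omega, Nat.doubleFactorial_two_mul]
            push_cast
            ring
        have hnj1 : n - j - 1 = 2 * m - 1 := by omega
        rw [hnj1, hk0]
        rw [eq_intCast]
        push_cast [hfact]
        have hne : (2 : ℝ) ^ m * (m ! : ℝ) ≠ 0 := by positivity
        field_simp
      · intro k hk hkm
        rw [Finset.mem_range] at hk
        by_cases hcond : j = n - 2 * k
        · have h2k : 2 * k > n := by omega
          rw [Nat.descFactorial_eq_zero_iff_lt.2 h2k]
          simp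
        · rw [if_neg hcond, mul_zero, mul_zero]
      · intro hm'
        exact absurd (Finset.mem_range.2 (by omega)) hm'
    · rw [if_neg he]
      apply Finset.sum_eq_zero
      intro k hk
      by_cases hcond : j = n - 2 * k
      · by_cases h2k : 2 * k ≤ n
        · exact absurd ⟨n - k, by omega⟩ he
        · rw [Nat.descFactorial_eq_zero_iff_lt.2 (by omega)]
          simp
      · rw [if_neg hcond, mul_zero, mul_zero]
  · have hc : Nat.choose n j = 0 := Nat.choose_eq_zero_of_lt (by omega)
    rw [hc]
    simp only [Nat.cast_zero, mul_zero, map_zero]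
    rw [ite_self]
    apply Finset.sum_eq_zero
    intro k hk
    rw [if_neg (by omega), mul_zero, mul_zero]
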